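/- One-form reduction identity: let θ, i : ℝ → ℝ and x̄, ȳ : ℝ → ℝ³ be C¹, and set x(t) = R₃(θ(t))R₁(i(t))x̄(t), y(t) = R₃(θ(t))R₁(i(t))ȳ(t), C = x × y, C̄ = x̄ × ȳ. Then for all t: y(t)·x'(t) = (C(t)·k³)·θ'(t) + (C̄(t)·k¹)·i'(t) + ȳ(t)·x̄'(t), where k¹ = (1,0,0), k³ = (0,0,1). -/
import Mathlib


open Matrix

/-- Rotation about the first axis by angle `i`. -/
noncomputable def rotOne (i : ℝ) : Matrix (Fin 3) (Fin 3) ℝ :=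
  !![1, 0, 0; 0, Real.cos i, -Real.sin i; 0, Real.sin i, Real.cos i]

/-- Rotation about the third axis by angle `θ`. -/
noncomputable def rotThree (θ : ℝ) : Matrix (Fin 3) (Fin 3) ℝ :=
  !![Real.cos θ, -Real.sin θ, 0; Real.sin θ, Real.cos θ, 0; 0, 0, 1]

/-- One-form reduction identity: with `x = R₃(θ)R₁(i)x̄`, `y = R₃(θ)R₁(i)ȳ`, `C = x × y`,
`C̄ = x̄ × ȳ`, one has `y·x' = (C·k³)θ' + (C̄·k¹)i' + ȳ·x̄'`. -/
theorem one_form_reduction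
    (θ i : ℝ → ℝ) (xb yb : ℝ → Fin 3 → ℝ)
    (hθ : Differentiable ℝ θ) (hi : Differentiable ℝ i)
    (hxb : Differentiable ℝ xb) (hyb : Differentiable ℝ yb)
    (x y C Cb : ℝ → Fin 3 → ℝ)
    (hx : ∀ t, x t = (rotThree (θ t) * rotOne (i t)).mulVec (xb t))
    (hy : ∀ t, y t = (rotThree (θ t) * rotOne (i t)).mulVec (yb t))
    (hC : ∀ t, C t = crossProduct (x t) (y t))
    (hCb : ∀ t, Cb t = crossProduct (xb t) (yb t)) :
    ∀ t, y t ⬝ᵥ deriv x t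
      = (C t ⬝ᵥ ![0, 0, 1]) * deriv θ t + (Cb t ⬝ᵥ ![1, 0, 0]) * deriv i t
        + yb t ⬝ᵥ deriv xb t := by
  have hxfun : x = fun t => ![Real.cos (θ t) * xb t 0 - Real.sin (θ t) * (Real.cos (i t) * xb t 1 - Real.sin (i t) * xb t 2),
      Real.sin (θ t) * xb t 0 + Real.cos (θ t) * (Real.cos (i t) * xb t 1 - Real.sin (i t) * xb t 2),
      Real.sin (i t) * xb t 1 + Real.cos (i t) * xb t 2] := by
    funext t
    rw [hx t]
    ext j
    fin_cases j <;>
      simp [rotThree, rotOne, mulVec, dotProduct, Fin.sum_univ_three, Matrix.mul_apply] <;> ring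
  intro t
  have hθt : HasDerivAt θ (deriv θ t) t := (hθ t).hasDerivAt
  have hit : HasDerivAt i (deriv i t) t := (hi t).hasDerivAt
  have hX : ∀ j, HasDerivAt (fun t => xb t j) (deriv xb t j) t :=
    hasDerivAt_pi.mp (hxb t).hasDerivAt
  have h0 := ((hθt.cos.mul (hX 0)).sub
    (hθt.sin.mul ((hit.cos.mul (hX 1)).sub (hit.sin.mul (hX 2)))))
  have h1 := ((hθt.sin.mul (hX 0)).add
    (hθt.cos.mul ((hit.cos.mul (hX 1)).sub (hit.sin.mul (hX 2)))))
  have h2 := ((hit.sin.mul (hX 1)).add (hit.cos.mul (hX 2)))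
  have hxD : HasDerivAt x
      ![-Real.sin (θ t) * deriv θ t * xb t 0 + Real.cos (θ t) * deriv xb t 0 -
          (Real.cos (θ t) * deriv θ t * (Real.cos (i t) * xb t 1 - Real.sin (i t) * xb t 2) +
            Real.sin (θ t) * (-Real.sin (i t) * deriv i t * xb t 1 + Real.cos (i t) * deriv xb t 1 -
              (Real.cos (i t) * deriv i t * xb t 2 + Real.sin (i t) * deriv xb t 2))),
        Real.cos (θ t) * deriv θ t * xb t 0 + Real.sin (θ t) * deriv xb t 0 +
          (-Real.sin (θ t) * deriv θ t * (Real.cos (i t) * xb t 1 - Real.sin (i t) * xb t 2) +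
            Real.cos (θ t) * (-Real.sin (i t) * deriv i t * xb t 1 + Real.cos (i t) * deriv xb t 1 -
              (Real.cos (i t) * deriv i t * xb t 2 + Real.sin (i t) * deriv xb t 2))),
        Real.cos (i t) * deriv i t * xb t 1 + Real.sin (i t) * deriv xb t 1 +
          (-Real.sin (i t) * deriv i t * xb t 2 + Real.cos (i t) * deriv xb t 2)] t := by
    rw [hxfun]
    refine hasDerivAt_pi.mpr fun j => ?_
    fin_cases j <;> simp only [Matrix.cons_val_zero, Matrix.cons_val_one, Matrix.head_cons,
      Matrix.cons_val_two, Matrix.tail_cons, Fin.isValue]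
    · exact h0
    · exact h1
    · exact h2
  rw [hxD.deriv, hC t, hCb t, hx t, hy t]
  have hs1 := Real.sin_sq_add_cos_sq (θ t)
  have hs2 := Real.sin_sq_add_cos_sq (i t)
  simp only [cross_apply, rotThree, rotOne, mulVec, dotProduct, Fin.sum_univ_three,
    Matrix.mul_apply, Matrix.cons_val_zero, Matrix.cons_val_one, Matrix.head_cons,
    Matrix.cons_val_two, Matrix.tail_cons, Matrix.cons_val', Matrix.empty_val',
    Matrix.cons_val_fin_one, Matrix.head_fin_const, Matrix.of_apply]
  linear_combination
    (yb t 0 * deriv xb t 0 +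
      (Real.cos (i t) * yb t 1 - Real.sin (i t) * yb t 2) *
        (-Real.sin (i t) * deriv i t * xb t 1 + Real.cos (i t) * deriv xb t 1 -
          (Real.cos (i t) * deriv i t * xb t 2 + Real.sin (i t) * deriv xb t 2))) * hs1 +
    (yb t 1 * deriv xb t 1 + yb t 2 * deriv xb t 2 +
      deriv i t * (xb t 1 * yb t 2 - xb t 2 * yb t 1)) * hs2
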